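/- Replacing the true constant weight on negatives by the debiased weights preserves the value in expectation: with π₀(u) = Q·𝟙[u ∉ D]/Σ_{u'∈N⁻}𝟙[u' ∉ D] applied to a multiset N⁻ of i.i.d. draws from p (conditioned on at least one draw landing outside D), the conditional expectation of Σ_{u∈N⁻} π₀(u)·g(u) equals Q·E_{u~p|u∉D}[g(u)]. -/

import Mathlib

open Finset

private lemma fiber_char {U : Type*} [Fintype U] [DecidableEq U] (D : Finset U) {n : ℕ}
    (A : Finset (Fin n)) (x : Fin n → U) :
    ((Finset.univ.filter (fun i : Fin n => x i ∉ D)) = A) ↔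
      ∀ i, if i ∈ A then x i ∉ D else x i ∈ D := by
  simp only [Finset.ext_iff, Finset.mem_filter, Finset.mem_univ, true_and]
  refine forall_congr' fun i => ?_
  by_cases hi : i ∈ A <;> simp [hi]

private lemma sum_pi_prod {U : Type*} [Fintype U] [DecidableEq U] {n : ℕ}
    (t : Fin n → Finset U) (h : Fin n → U → ℝ) :
    ∑ x ∈ Fintype.piFinset t, ∏ i, h i (x i) = ∏ i, ∑ u ∈ t i, h i u :=
  (Finset.prod_univ_sum t h).symm

private lemma prod_if_mem {n : ℕ} (A : Finset (Fin n)) (q d : ℝ) :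
    (∏ i : Fin n, if i ∈ A then q else d) = q ^ A.card * d ^ (n - A.card) := by
  rw [Finset.prod_ite, Finset.prod_const, Finset.prod_const]
  congr 2
  · simp [Finset.filter_mem_eq_inter]
  · have : Finset.univ.filter (fun i : Fin n => i ∉ A) = Aᶜ := by
      ext i; simp
    rw [this, Finset.card_compl, Fintype.card_fin]

/-- The debiased weights `π₀(u) = Q·𝟙[u ∉ D]/Σ_{u'∈N⁻}𝟙[u' ∉ D]` preserve the value in
expectation: conditioned on at least one of the i.i.d. draws `u₁,…,uₙ ~ p` landing
outside `D`, the conditional expectation of `Σ_{u∈N⁻} π₀(u)·g(u)` equals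
`Q·E_{u~p|u∉D}[g(u)]`. -/
theorem debiased_weights_conditional_expectation {U : Type*} [Fintype U] [DecidableEq U]
    (D : Finset U) (p : U → ℝ) (hp : ∀ u, 0 ≤ p u) (hpsum : ∑ u, p u = 1)
    (hpos : 0 < ∑ u ∈ Finset.univ.filter (fun u => u ∉ D), p u)
    (g : U → ℝ) (Q : ℝ) (hQ : 0 < Q) (n : ℕ) (hn : 0 < n) :
    (∑ x : Fin n → U,
        (if ∃ i, x i ∉ D then
          (∏ i, p (x i)) *
            (∑ i, (if x i ∉ D then
                Q / ((Finset.univ.filter (fun i' : Fin n => x i' ∉ D)).card : ℝ)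
              else 0) * g (x i))
        else 0)) /
      (∑ x : Fin n → U, (if ∃ i, x i ∉ D then ∏ i, p (x i) else 0))
    = Q * (∑ u ∈ Finset.univ.filter (fun u => u ∉ D), p u * g u) /
        (∑ u ∈ Finset.univ.filter (fun u => u ∉ D), p u) := by
  classical
  set S : Finset U := Finset.univ.filter (fun u => u ∉ D) with hS
  set T : Finset U := Finset.univ.filter (fun u => u ∈ D) with hT
  set q : ℝ := ∑ u ∈ S, p u with hqdef
  set d : ℝ := ∑ u ∈ T, p u with hddef
  set G : ℝ := ∑ u ∈ S, p u * g u with hGdef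
  have hq : 0 < q := hpos
  have hd : 0 ≤ d := Finset.sum_nonneg fun u _ => hp u
  have hmemS : ∀ u, u ∈ S ↔ u ∉ D := by intro u; simp [hS]
  have hmemT : ∀ u, u ∈ T ↔ u ∈ D := by intro u; simp [hT]
  -- fiber decomposition
  have key : ∀ (F : (Fin n → U) → ℝ),
      ∑ x : Fin n → U, F x = ∑ A : Finset (Fin n),
        ∑ x ∈ Fintype.piFinset (fun i => if i ∈ A then S else T), F x := by
    intro F
    rw [← Finset.sum_fiberwise Finset.univ
      (fun x : Fin n → U => Finset.univ.filter (fun i => x i ∉ D)) F]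
    refine Finset.sum_congr rfl fun A _ => Finset.sum_congr ?_ fun _ _ => rfl
    ext x
    simp only [Finset.mem_filter, Finset.mem_univ, true_and, Fintype.mem_piFinset]
    rw [fiber_char D A x]
    refine forall_congr' fun i => ?_
    by_cases hi : i ∈ A <;> simp [hi, hmemS, hmemT]
  have mem_pi : ∀ (A : Finset (Fin n)) (x : Fin n → U),
      x ∈ Fintype.piFinset (fun i => if i ∈ A then S else T) →
      (Finset.univ.filter (fun i : Fin n => x i ∉ D)) = A := by
    intro A x hx
    rw [Fintype.mem_piFinset] at hx
    rw [fiber_char D A x]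
    intro i
    have h := hx i
    by_cases hi : i ∈ A
    · simpa [hi, hmemS] using h
    · simpa [hi, hmemT] using h
  have hcond : ∀ (A : Finset (Fin n)) (x : Fin n → U),
      x ∈ Fintype.piFinset (fun i => if i ∈ A then S else T) →
      ((∃ i, x i ∉ D) ↔ A.Nonempty) := by
    intro A x hx
    rw [← mem_pi A x hx, Finset.filter_nonempty_iff]
    simp
  -- denominator
  have den_eq : (∑ x : Fin n → U, (if ∃ i, x i ∉ D then ∏ i, p (x i) else 0))
      = ∑ A ∈ Finset.univ.filter (fun A : Finset (Fin n) => A.Nonempty),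
          q ^ A.card * d ^ (n - A.card) := by
    rw [key, Finset.sum_filter]
    refine Finset.sum_congr rfl fun A _ => ?_
    by_cases hA : A.Nonempty
    · rw [if_pos hA,
        Finset.sum_congr rfl (fun x hx => if_pos ((hcond A x hx).2 hA)),
        ← Finset.prod_univ_sum, ← prod_if_mem A q d]
      refine Finset.prod_congr rfl fun i _ => ?_
      by_cases hi : i ∈ A <;> simp [hi, hqdef, hddef]
    · rw [if_neg hA]
      refine Finset.sum_eq_zero fun x hx => ?_
      rw [if_neg (fun h => hA ((hcond A x hx).1 h))]
  -- numerator
  have num_eq : (∑ x : Fin n → U,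
        (if ∃ i, x i ∉ D then
          (∏ i, p (x i)) *
            (∑ i, (if x i ∉ D then
                Q / ((Finset.univ.filter (fun i' : Fin n => x i' ∉ D)).card : ℝ)
              else 0) * g (x i))
        else 0))
      = ∑ A ∈ Finset.univ.filter (fun A : Finset (Fin n) => A.Nonempty),
          Q * G * q ^ (A.card - 1) * d ^ (n - A.card) := by
    rw [key, Finset.sum_filter]
    refine Finset.sum_congr rfl fun A _ => ?_
    by_cases hA : A.Nonempty
    · rw [if_pos hA]
      have step1 : ∀ x ∈ Fintype.piFinset (fun i => if i ∈ A then S else T),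
          (if ∃ i, x i ∉ D then
            (∏ i, p (x i)) *
              (∑ i, (if x i ∉ D then
                  Q / ((Finset.univ.filter (fun i' : Fin n => x i' ∉ D)).card : ℝ)
                else 0) * g (x i))
          else 0)
          = ∑ i ∈ A, (Q / (A.card : ℝ)) * (g (x i) * ∏ j, p (x j)) := by
        intro x hx
        rw [if_pos ((hcond A x hx).2 hA), mem_pi A x hx]
        have hiff : ∀ i : Fin n, (x i ∉ D) ↔ i ∈ A := by
          intro i
          conv_rhs => rw [← mem_pi A x hx]
          simp
        rw [Finset.mul_sum, ← Finset.sum_filter_add_sum_filter_not Finset.univ (· ∈ A)]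
        have h2 : ∑ i ∈ Finset.univ.filter (fun i => i ∉ A),
            (∏ j, p (x j)) * ((if x i ∉ D then Q / (A.card : ℝ) else 0) * g (x i)) = 0 := by
          refine Finset.sum_eq_zero fun i hi => ?_
          have : ¬ (x i ∉ D) := by
            rw [hiff]; exact (Finset.mem_filter.1 hi).2
          rw [if_neg this]; ring
        rw [h2, add_zero, Finset.filter_mem_eq_inter, Finset.univ_inter]
        refine Finset.sum_congr rfl fun i hi => ?_
        rw [if_pos ((hiff i).2 hi)]
        ring
      rw [Finset.sum_congr rfl step1, Finset.sum_comm]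
      have step2 : ∀ i ∈ A,
          (∑ x ∈ Fintype.piFinset (fun j => if j ∈ A then S else T),
            (Q / (A.card : ℝ)) * (g (x i) * ∏ j, p (x j)))
          = (Q / (A.card : ℝ)) * (G * (q ^ (A.card - 1) * d ^ (n - A.card))) := by
        intro i hi
        rw [← Finset.mul_sum]
        congr 1
        have : ∀ x : Fin n → U, g (x i) * ∏ j, p (x j)
            = ∏ j, (fun j u => p u * (if j = i then g u else 1)) j (x j) := by
          intro x
          simp only []
          rw [Finset.prod_mul_distrib, Finset.prod_ite_eq' Finset.univ i (fun j => g (x j)),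
            if_pos (Finset.mem_univ i)]
          ring
        rw [Finset.sum_congr rfl (fun x _ => this x),
          sum_pi_prod (fun j => if j ∈ A then S else T)
            (fun j u => p u * (if j = i then g u else 1))]
        rw [← Finset.mul_prod_erase Finset.univ _ (Finset.mem_univ i)]
        have hGi : (∑ u ∈ (if i ∈ A then S else T), p u * (if i = i then g u else 1)) = G := by
          simp [hi, hGdef]
        rw [hGi]
        congr 1
        have : ∀ j ∈ Finset.univ.erase i,
            (∑ u ∈ (if j ∈ A then S else T), p u * (if j = i then g u else 1))
            = if j ∈ A then q else d := by
          intro j hj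
          have hji : j ≠ i := (Finset.mem_erase.1 hj).1
          by_cases hjA : j ∈ A <;> simp [hjA, hji, hqdef, hddef]
        rw [Finset.prod_congr rfl this, Finset.prod_ite, Finset.prod_const, Finset.prod_const]
        congr 2
        · have : (Finset.univ.erase i).filter (fun j => j ∈ A) = A.erase i := by
            ext j; simp [and_comm]
          rw [this, Finset.card_erase_of_mem hi]
        · have : (Finset.univ.erase i).filter (fun j => j ∉ A) =
              Finset.univ.filter (fun j => j ∉ A) := by
            ext j
            constructor
            · intro hj
              simp only [Finset.mem_filter, Finset.mem_erase, Finset.mem_univ,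
                true_and, and_true] at hj ⊢
              exact hj.2
            · intro hj
              simp only [Finset.mem_filter, Finset.mem_erase, Finset.mem_univ,
                true_and, and_true] at hj ⊢
              exact ⟨fun hji => hj (by rw [hji]; exact hi), hj⟩
          rw [this]
          congr 1
          have : Finset.univ.filter (fun j : Fin n => j ∉ A) = Aᶜ := by ext j; simp
          rw [this, Finset.card_compl, Fintype.card_fin]
      rw [Finset.sum_congr rfl step2, Finset.sum_const, nsmul_eq_mul]
      have hcard : (A.card : ℝ) ≠ 0 := Nat.cast_ne_zero.2 (Finset.card_pos.2 hA).ne'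
      field_simp
    · rw [if_neg hA]
      refine Finset.sum_eq_zero fun x hx => ?_
      rw [if_neg (fun h => hA ((hcond A x hx).1 h))]
  -- combine
  have hden_pos : 0 < ∑ A ∈ Finset.univ.filter (fun A : Finset (Fin n) => A.Nonempty),
      q ^ A.card * d ^ (n - A.card) := by
    have huniv : (Finset.univ : Finset (Fin n)) ∈
        Finset.univ.filter (fun A : Finset (Fin n) => A.Nonempty) := by
      simp [Finset.univ_nonempty_iff, Fin.pos_iff_nonempty.1 hn]
    refine Finset.sum_pos' (fun A _ => ?_) ⟨Finset.univ, huniv, ?_⟩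
    · positivity
    · have : (Finset.univ : Finset (Fin n)).card = n := by simp
      rw [this, Nat.sub_self, pow_zero, mul_one]
      positivity
  have num_den : (∑ x : Fin n → U,
        (if ∃ i, x i ∉ D then
          (∏ i, p (x i)) *
            (∑ i, (if x i ∉ D then
                Q / ((Finset.univ.filter (fun i' : Fin n => x i' ∉ D)).card : ℝ)
              else 0) * g (x i))
        else 0))
      = (Q * G / q) * (∑ x : Fin n → U, (if ∃ i, x i ∉ D then ∏ i, p (x i) else 0)) := by
    clear_value q d G
    rw [num_eq, den_eq, Finset.mul_sum]
    refine Finset.sum_congr rfl fun A hA => ?_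
    have h1 : 1 ≤ A.card := Finset.card_pos.2 (Finset.mem_filter.1 hA).2
    have h2 : q ^ A.card = q * q ^ (A.card - 1) := by
      rw [← pow_succ', Nat.sub_add_cancel h1]
    rw [h2]
    field_simp
  have hden' : (∑ x : Fin n → U, (if ∃ i, x i ∉ D then ∏ i, p (x i) else 0)) ≠ 0 := by
    rw [den_eq]; exact hden_pos.ne'
  rw [num_den, mul_div_assoc, div_self hden', mul_one]
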